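/- For every χ ∈ (0,1): ∫_χ^1 (1−ζ) ζ^{−3/4} (ζ−χ)^{−3/4} dζ = (16/5)·(1−χ)^{5/4}·₂F₁(3/4, 2; 9/4; 1−χ). -/

import Mathlib

/-- The Gauss hypergeometric series `₂F₁(a,b;c;z) = Σ_n (a)_n (b)_n / ((c)_n n!) · zⁿ`,
where `(a)_n` is the rising factorial (Pochhammer symbol). -/
noncomputable def hyp2F1 (a b c z : ℝ) : ℝ :=
  ∑' n : ℕ, ((ascPochhammer ℝ n).eval a * (ascPochhammer ℝ n).eval b /
      ((ascPochhammer ℝ n).eval c * (n.factorial : ℝ))) * z ^ n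

/-- `A(χ) := ∫_χ^1 (1−ζ) ζ^{−3/4} (ζ−χ)^{−3/4} dζ`. -/
noncomputable def Aint (χ : ℝ) : ℝ :=
  ∫ ζ in χ..1, (1 - ζ) * ζ ^ (-(3/4) : ℝ) * (ζ - χ) ^ (-(3/4) : ℝ)

open Real MeasureTheory Set intervalIntegral

namespace Stmt14


/-- Pochhammer evaluation shorthand. -/
noncomputable def P (a : ℝ) (n : ℕ) : ℝ := (ascPochhammer ℝ n).eval a

lemma P_zero (a : ℝ) : P a 0 = 1 := by simp [P]

lemma P_succ (a : ℝ) (n : ℕ) : P a (n + 1) = P a n * (a + n) := by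
  simp [P, ascPochhammer_succ_eval]

lemma P_pos {a : ℝ} (ha : 0 < a) (n : ℕ) : 0 < P a n := by
  induction n with
  | zero => simp [P_zero]
  | succ n ih => rw [P_succ]; positivity

lemma P_two (n : ℕ) : P 2 n = (n + 1).factorial := by
  induction n with
  | zero => simp [P_zero]
  | succ n ih =>
      rw [P_succ, ih]
      rw [show n + 1 + 1 = (n+1)+1 from rfl, Nat.factorial_succ (n+1)]
      push_cast
      ring

/-- coefficient of the binomial series -/
noncomputable def cc (a : ℝ) (n : ℕ) : ℝ := P a n / n.factorial

lemma cc_zero (a : ℝ) : cc a 0 = 1 := by simp [cc, P_zero]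

lemma cc_nonneg {a : ℝ} (ha : 0 < a) (n : ℕ) : 0 ≤ cc a n := by
  have := P_pos ha n
  have : (0:ℝ) < n.factorial := by positivity
  unfold cc
  positivity

lemma cc_le_one {a : ℝ} (ha : 0 < a) (ha1 : a ≤ 1) (n : ℕ) : cc a n ≤ 1 := by
  induction n with
  | zero => simp [cc_zero]
  | succ n ih =>
      have hP := P_pos ha n
      have hfac : (0:ℝ) < n.factorial := by positivity
      have : cc a (n+1) = cc a n * ((a + n) / (n + 1)) := by
        unfold cc
        rw [P_succ, Nat.factorial_succ]
        push_cast
        field_simp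
      rw [this]
      have h1 : (a + n) / (n + 1) ≤ 1 := by
        rw [div_le_one (by positivity)]
        linarith
      have h0 : 0 ≤ cc a n := cc_nonneg ha n
      nlinarith

lemma cc_succ_mul (a : ℝ) (n : ℕ) :
    cc a (n+1) * ((n : ℝ) + 1) = cc a n * (a + n) := by
  unfold cc
  have hfac : ((n:ℝ) + 1) ≠ 0 := by positivity
  rw [P_succ, Nat.factorial_succ]
  push_cast
  field_simp


lemma summable_cc_pow {a : ℝ} (ha : 0 < a) (ha1 : a ≤ 1) {y : ℝ} (hy : |y| < 1) :
    Summable (fun n : ℕ => cc a n * y ^ n) := by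
  apply Summable.of_norm_bounded (g := fun n => |y| ^ n)
    (summable_geometric_of_lt_one (abs_nonneg y) hy)
  intro n
  rw [norm_mul, norm_pow, Real.norm_eq_abs, Real.norm_eq_abs, abs_of_nonneg (cc_nonneg ha n)]
  calc cc a n * |y| ^ n ≤ 1 * |y| ^ n :=
        mul_le_mul_of_nonneg_right (cc_le_one ha ha1 n) (by positivity)
    _ = |y| ^ n := one_mul _

lemma summable_cc_deriv {a : ℝ} (ha : 0 < a) (ha1 : a ≤ 1) {y : ℝ} (hy : |y| < 1) :
    Summable (fun n : ℕ => cc a n * ((n : ℝ) * y ^ (n - 1))) := by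
  rw [← summable_nat_add_iff 1]
  have hgeom : Summable (fun n : ℕ => ((n : ℝ) + 1) * |y| ^ n) := by
    have h1 : Summable (fun n : ℕ => (n : ℝ) ^ 1 * |y| ^ n) :=
      summable_pow_mul_geometric_of_norm_lt_one 1 (by rwa [Real.norm_eq_abs, abs_abs])
    have h2 : Summable (fun n : ℕ => |y| ^ n) := summable_geometric_of_lt_one (abs_nonneg y) hy
    simpa [add_mul, pow_one] using h1.add h2
  apply Summable.of_norm_bounded hgeom
  intro n
  simp only [Nat.add_sub_cancel]
  rw [norm_mul, norm_mul, norm_pow, Real.norm_eq_abs, Real.norm_eq_abs, Real.norm_eq_abs,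
    abs_of_nonneg (cc_nonneg ha (n+1)), Nat.abs_cast]
  push_cast
  calc cc a (n+1) * (((n:ℝ)+1) * |y| ^ n) ≤ 1 * (((n:ℝ)+1) * |y| ^ n) :=
        mul_le_mul_of_nonneg_right (cc_le_one ha ha1 (n+1)) (by positivity)
    _ = ((n:ℝ)+1) * |y| ^ n := one_mul _

lemma hasDerivAt_ccsum {a : ℝ} (ha : 0 < a) (ha1 : a ≤ 1) {y : ℝ} (hy : |y| < 1) :
    HasDerivAt (fun z : ℝ => ∑' n : ℕ, cc a n * z ^ n)
      (∑' n : ℕ, cc a n * ((n : ℝ) * y ^ (n - 1))) y := by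
  set r : ℝ := (1 + |y|) / 2 with hr
  have hy0 := abs_nonneg y
  have hr0 : 0 < r := by positivity
  have hr1 : r < 1 := by rw [hr]; linarith
  have hyr : |y| < r := by rw [hr]; linarith
  have hrr : |r| < 1 := by rwa [abs_of_pos hr0]
  apply hasDerivAt_tsum_of_isPreconnected (u := fun n : ℕ => cc a n * ((n : ℝ) * r ^ (n - 1)))
    (summable_cc_deriv ha ha1 hrr) isOpen_Ioo (convex_Ioo (-r) r).isPreconnected
    (fun n z _ => (hasDerivAt_pow n z).const_mul (cc a n))
    (fun n z hz => ?_) (show (0:ℝ) ∈ Ioo (-r) r from ⟨by linarith, hr0⟩) ?_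
    (show y ∈ Ioo (-r) r from abs_lt.mp hyr)
  · apply summable_of_ne_finset_zero (s := {0})
    intro n hn
    have : n ≠ 0 := by simpa using hn
    simp [zero_pow this]
  · have hz' : |z| ≤ r := le_of_lt (abs_lt.mpr ⟨hz.1, hz.2⟩)
    rw [norm_mul, norm_mul, norm_pow, Real.norm_eq_abs, Real.norm_eq_abs, Real.norm_eq_abs,
      abs_of_nonneg (cc_nonneg ha n), Nat.abs_cast]
    have h1 : |z| ^ (n-1) ≤ r ^ (n-1) := pow_le_pow_left₀ (abs_nonneg z) hz' _
    have h2 : (0:ℝ) ≤ cc a n := cc_nonneg ha n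
    have h3 : (0:ℝ) ≤ (n:ℝ) := Nat.cast_nonneg n
    exact mul_le_mul_of_nonneg_left (mul_le_mul_of_nonneg_left h1 h3) h2

lemma pow_shift (z : ℝ) (n : ℕ) : (n : ℝ) * z ^ n = (n : ℝ) * (z * z ^ (n - 1)) := by
  cases n with
  | zero => simp
  | succ m => rw [Nat.add_sub_cancel, pow_succ]; ring

lemma hasSum_binomial {a : ℝ} (ha : 0 < a) (ha1 : a ≤ 1) {y : ℝ} (hy : |y| < 1) :
    HasSum (fun n : ℕ => cc a n * y ^ n) ((1 - y) ^ (-a)) := by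
  set g : ℝ → ℝ := fun z => ∑' n : ℕ, cc a n * z ^ n with hgdef
  -- the ODE (1-z) g'(z) = a g(z)
  have key : ∀ z : ℝ, |z| < 1 →
      (1 - z) * (∑' n : ℕ, cc a n * ((n : ℝ) * z ^ (n - 1))) = a * g z := by
    intro z hz
    have hS : Summable (fun n : ℕ => cc a n * z ^ n) := summable_cc_pow ha ha1 hz
    have hD : Summable (fun n : ℕ => cc a n * ((n : ℝ) * z ^ (n - 1))) :=
      summable_cc_deriv ha ha1 hz
    set s := ∑' n : ℕ, cc a n * z ^ n with hs
    set d := ∑' n : ℕ, cc a n * ((n : ℝ) * z ^ (n - 1)) with hd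
    have hsd : HasSum (fun n : ℕ => cc a n * ((n : ℝ) * z ^ (n - 1))) d := hD.hasSum
    have hshift : HasSum (fun n : ℕ => cc a (n+1) * (((n : ℝ) + 1) * z ^ n)) d := by
      have h2 := (hasSum_nat_add_iff'
        (f := fun n : ℕ => cc a n * ((n : ℝ) * z ^ (n - 1))) 1).mpr hsd
      simp only [Finset.range_one, Finset.sum_singleton, Nat.cast_zero, zero_mul, mul_zero,
        sub_zero, Nat.add_sub_cancel, Nat.cast_add, Nat.cast_one] at h2
      exact h2
    have hptw : ∀ n : ℕ, cc a (n+1) * (((n : ℝ) + 1) * z ^ n)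
        = a * (cc a n * z ^ n) + z * (cc a n * ((n : ℝ) * z ^ (n - 1))) := by
      intro n
      have h1 : cc a (n+1) * (((n : ℝ) + 1) * z ^ n) = (cc a n * (a + n)) * z ^ n := by
        rw [← cc_succ_mul a n]; ring
      rw [h1]
      have h2 := pow_shift z n
      linear_combination (cc a n) * h2
    have hsum2 : HasSum (fun n : ℕ => cc a (n+1) * (((n : ℝ) + 1) * z ^ n)) (a * s + z * d) := by
      have h3 := (hS.hasSum.mul_left a).add (hsd.mul_left z)
      rw [show (fun n : ℕ => cc a (n+1) * (((n : ℝ) + 1) * z ^ n))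
        = fun n : ℕ => a * (cc a n * z ^ n) + z * (cc a n * ((n : ℝ) * z ^ (n - 1)))
        from funext hptw]
      exact h3
    have hfinal : d = a * s + z * d := hshift.unique hsum2
    rw [sub_mul, one_mul]
    linarith
  -- the function g(z) (1-z)^a has zero derivative on (-1,1)
  have hder : ∀ z ∈ Ioo (-1:ℝ) 1, HasDerivAt (fun w : ℝ => g w * (1 - w) ^ a) 0 z := by
    intro z hz
    have hz1 : |z| < 1 := abs_lt.mpr ⟨hz.1, hz.2⟩
    have h1z : (0:ℝ) < 1 - z := by linarith [hz.2]
    have hg' : HasDerivAt g (∑' n : ℕ, cc a n * ((n : ℝ) * z ^ (n - 1))) z :=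
      hasDerivAt_ccsum ha ha1 hz1
    have hbase : HasDerivAt (fun w : ℝ => 1 - w) (-1) z := (hasDerivAt_id z).const_sub 1
    have hr2 : HasDerivAt (fun w : ℝ => (1 - w) ^ a) (a * (1 - z) ^ (a - 1) * (-1)) z := by
      have := HasDerivAt.comp z (Real.hasDerivAt_rpow_const (p := a) (Or.inl h1z.ne')) hbase
      simpa [Function.comp_def] using this
    have hmul := hg'.mul hr2
    have hval : (∑' n : ℕ, cc a n * ((n : ℝ) * z ^ (n - 1))) * (1 - z) ^ a
        + g z * (a * (1 - z) ^ (a - 1) * (-1)) = 0 := by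
      have hrw : (1 - z) ^ a = (1 - z) * (1 - z) ^ (a - 1) := by
        nth_rewrite 1 [show a = 1 + (a - 1) by ring]
        rw [Real.rpow_add h1z, Real.rpow_one]
      rw [hrw]
      have hk := key z hz1
      linear_combination ((1 - z) ^ (a - 1)) * hk
    rw [← hval]
    exact hmul
  -- hence it is constant, equal to its value 1 at 0
  have hconst : ∀ z ∈ Ioo (-1:ℝ) 1, g z * (1 - z) ^ a = 1 := by
    have h00 : (0:ℝ) ∈ Ioo (-1:ℝ) 1 := ⟨by norm_num, by norm_num⟩
    have hg0 : g 0 = 1 := by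
      have h1 : HasSum (fun n : ℕ => cc a n * (0:ℝ) ^ n) 1 := by
        have h2 := hasSum_single (f := fun n : ℕ => cc a n * (0:ℝ) ^ n) 0
          (fun b hb => by simp [zero_pow hb])
        simpa [cc_zero] using h2
      exact h1.tsum_eq
    intro z hz
    have hcst := (convex_Ioo (-1:ℝ) 1).is_const_of_fderivWithin_eq_zero
      (f := fun w : ℝ => g w * (1 - w) ^ a)
      (fun w hw => ((hder w hw).differentiableAt).differentiableWithinAt)
      (fun w hw => by
        rw [fderivWithin_of_isOpen isOpen_Ioo hw, (hder w hw).hasFDerivAt.fderiv]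
        ext x
        simp) hz h00
    simpa [hg0] using hcst
  -- conclude
  have hy1 : y ∈ Ioo (-1:ℝ) 1 := abs_lt.mp hy
  have h1y : (0:ℝ) < 1 - y := by linarith [hy1.2]
  have hgy : g y = (1 - y) ^ (-a) := by
    have h2 := hconst y hy1
    have hne : ((1:ℝ) - y) ^ a ≠ 0 := (Real.rpow_pos_of_pos h1y a).ne'
    rw [Real.rpow_neg h1y.le]
    field_simp
    linarith [h2]
  have hs := (summable_cc_pow ha ha1 hy).hasSum
  rw [hgdef] at hgy
  rw [← hgy]
  exact hs


/-- `J m = ∫_0^1 t^{-3/4} (1-t)^m dt`. -/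
noncomputable def J (m : ℕ) : ℝ :=
  ∫ t in (0:ℝ)..1, t ^ (-(3/4) : ℝ) * (1 - t) ^ m

lemma contPow : Continuous (fun t : ℝ => t ^ ((1/4) : ℝ)) := by
  rw [continuous_iff_continuousAt]
  intro t
  rcases eq_or_ne t 0 with h | h
  · subst h
    exact Real.continuousAt_rpow_const 0 _ (Or.inr (by norm_num))
  · exact Real.continuousAt_rpow_const t _ (Or.inl h)

lemma Jint (m : ℕ) :
    IntervalIntegrable (fun t : ℝ => t ^ (-(3/4) : ℝ) * (1 - t) ^ m) volume 0 1 := by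
  apply IntervalIntegrable.mul_continuousOn
  · exact intervalIntegral.intervalIntegrable_rpow' (by norm_num)
  · exact Continuous.continuousOn (by continuity)

lemma J_zero : J 0 = 4 := by
  unfold J
  simp only [pow_zero, mul_one]
  rw [integral_rpow (Or.inl (by norm_num))]
  rw [Real.one_rpow, Real.zero_rpow (by norm_num)]
  norm_num

lemma J_rec (m : ℕ) : (4 * ((m : ℝ) + 1) + 1) * J (m + 1) = 4 * ((m : ℝ) + 1) * J m := by
  set k := m + 1 with hk
  have hk1 : (k : ℝ) = (m : ℝ) + 1 := by rw [hk]; push_cast; ring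
  have hcontF : Continuous (fun t : ℝ => 4 * t ^ ((1/4) : ℝ) * (1 - t) ^ k) :=
    (continuous_const.mul contPow).mul (by continuity)
  have hint2 : IntervalIntegrable
      (fun t : ℝ => 4 * (k : ℝ) * (t ^ ((1/4) : ℝ) * (1 - t) ^ m)) volume 0 1 :=
    Continuous.intervalIntegrable (continuous_const.mul (contPow.mul (by continuity))) 0 1
  have hderiv : ∀ t ∈ Ioo (0:ℝ) 1,
      HasDerivWithinAt (fun t : ℝ => 4 * t ^ ((1/4) : ℝ) * (1 - t) ^ k)
        (t ^ (-(3/4) : ℝ) * (1 - t) ^ k - 4 * (k : ℝ) * (t ^ ((1/4) : ℝ) * (1 - t) ^ m))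
        (Ioi t) t := by
    intro t ht
    have ht0 : t ≠ 0 := ne_of_gt ht.1
    have h1 : HasDerivAt (fun t : ℝ => 4 * t ^ ((1/4) : ℝ)) (4 * ((1/4) * t ^ ((1/4) - 1 : ℝ))) t :=
      (Real.hasDerivAt_rpow_const (Or.inl ht0)).const_mul 4
    have h2 : HasDerivAt (fun t : ℝ => (1 - t) ^ k) ((k : ℝ) * (1 - t) ^ (k - 1) * (-1)) t := by
      have hb : HasDerivAt (fun t : ℝ => 1 - t) (-1) t := (hasDerivAt_id t).const_sub 1
      have := HasDerivAt.comp t (hasDerivAt_pow k (1 - t)) hb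
      simpa [Function.comp_def] using this
    have h3 := h1.mul h2
    have heq : 4 * ((1/4) * t ^ ((1/4) - 1 : ℝ)) * (1 - t) ^ k
        + 4 * t ^ ((1/4) : ℝ) * ((k : ℝ) * (1 - t) ^ (k - 1) * (-1))
        = t ^ (-(3/4) : ℝ) * (1 - t) ^ k - 4 * (k : ℝ) * (t ^ ((1/4) : ℝ) * (1 - t) ^ m) := by
      rw [show ((1/4 : ℝ) - 1) = -(3/4) by norm_num, show k - 1 = m from rfl]
      ring
    exact (heq ▸ h3).hasDerivWithinAt
  have hFTC : (∫ t in (0:ℝ)..1,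
      (t ^ (-(3/4) : ℝ) * (1 - t) ^ k - 4 * (k : ℝ) * (t ^ ((1/4) : ℝ) * (1 - t) ^ m))) = 0 := by
    rw [integral_eq_sub_of_hasDeriv_right_of_le zero_le_one hcontF.continuousOn hderiv
      ((Jint k).sub hint2)]
    have hkne : k ≠ 0 := Nat.succ_ne_zero m
    simp [Real.one_rpow, Real.zero_rpow (show ((1/4):ℝ) ≠ 0 by norm_num), zero_pow hkne]
  rw [intervalIntegral.integral_sub (Jint k) hint2, intervalIntegral.integral_const_mul] at hFTC
  have h5 : (∫ t in (0:ℝ)..1, t ^ ((1/4) : ℝ) * (1 - t) ^ m) = J m - J (m + 1) := by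
    have hcongr : EqOn (fun t : ℝ => t ^ ((1/4) : ℝ) * (1 - t) ^ m)
        (fun t : ℝ => t ^ (-(3/4) : ℝ) * (1 - t) ^ m - t ^ (-(3/4) : ℝ) * (1 - t) ^ (m+1))
        (uIcc (0:ℝ) 1) := by
      intro t ht
      rw [uIcc_of_le zero_le_one] at ht
      rcases eq_or_lt_of_le ht.1 with h0 | h0
      · simp [← h0, Real.zero_rpow (show ((1/4):ℝ) ≠ 0 by norm_num),
          Real.zero_rpow (show (-(3/4):ℝ) ≠ 0 by norm_num)]
      · have hrw : t ^ ((1/4) : ℝ) = t ^ (-(3/4) : ℝ) * t := by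
          rw [show ((1/4):ℝ) = -(3/4) + 1 by norm_num, Real.rpow_add h0, Real.rpow_one]
        simp only [pow_succ]
        linear_combination ((1 - t) ^ m) * hrw
    rw [intervalIntegral.integral_congr hcongr,
      intervalIntegral.integral_sub (Jint m) (Jint (m+1))]
    rfl
  rw [h5, hk1] at hFTC
  have hFTC2 : J (m+1) - 4 * ((m:ℝ)+1) * (J m - J (m+1)) = 0 := hFTC
  linear_combination hFTC2

lemma J_closed (n : ℕ) : J (n + 1) = 16/5 * ((n+1).factorial : ℝ) / P (9/4) n := by
  induction n with
  | zero =>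
      have h := J_rec 0
      rw [J_zero] at h
      simp only [P_zero, Nat.factorial_one]
      norm_num at h ⊢
      linarith
  | succ n ih =>
      have h := J_rec (n + 1)
      rw [ih] at h
      have hP := P_pos (show (0:ℝ) < 9/4 by norm_num) n
      rw [P_succ, show n + 1 + 1 = (n+1)+1 from rfl, Nat.factorial_succ (n+1)]
      push_cast at h ⊢
      have h9 : (0:ℝ) < 9/4 + n := by positivity
      field_simp at h ⊢
      nlinarith [h, hP, h9]


lemma P_ratio (n : ℕ) : ((n : ℝ) + 1) * P (3/4) n ≤ P (9/4) n := by
  induction n with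
  | zero => simp [P_zero]
  | succ n ih =>
      rw [P_succ, P_succ]
      have h34 := P_pos (show (0:ℝ) < 3/4 by norm_num) n
      have h94 := P_pos (show (0:ℝ) < 9/4 by norm_num) n
      push_cast
      nlinarith [ih, h34, h94, Nat.cast_nonneg (α := ℝ) n]

lemma Kseries {z : ℝ} (hz0 : 0 < z) (hz1 : z < 1) :
    (∫ t in (0:ℝ)..1, t ^ (-(3/4):ℝ) * (1 - t) * (1 - z * (1 - t)) ^ (-(3/4):ℝ))
      = ∑' n : ℕ, cc (3/4) n * z ^ n * J (n + 1) := by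
  set F : ℕ → ℝ → ℝ :=
    fun n t => (cc (3/4) n * z ^ n) * (t ^ (-(3/4):ℝ) * (1 - t) ^ (n+1)) with hF
  have hInt : ∀ n, IntegrableOn (F n) (Ioc (0:ℝ) 1) volume := fun n =>
    (intervalIntegrable_iff_integrableOn_Ioc_of_le zero_le_one).1 ((Jint (n+1)).const_mul _)
  have hval : ∀ n, (∫ t in Ioc (0:ℝ) 1, F n t) = cc (3/4) n * z ^ n * J (n+1) := by
    intro n
    rw [← intervalIntegral.integral_of_le zero_le_one]
    rw [show (∫ t in (0:ℝ)..1, F n t)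
        = ∫ t in (0:ℝ)..1, (cc (3/4) n * z ^ n) * (t ^ (-(3/4):ℝ) * (1 - t) ^ (n+1)) from rfl]
    rw [intervalIntegral.integral_const_mul]
    rfl
  have hnonneg : ∀ n, ∀ t ∈ Ioc (0:ℝ) 1, 0 ≤ F n t := by
    intro n t ht
    have h1 : (0:ℝ) ≤ t := le_of_lt ht.1
    have h2 : (0:ℝ) ≤ 1 - t := by linarith [ht.2]
    have h3 := cc_nonneg (show (0:ℝ) < 3/4 by norm_num) n
    exact mul_nonneg (mul_nonneg h3 (by positivity))
      (mul_nonneg (Real.rpow_nonneg h1 _) (pow_nonneg h2 _))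
  have hnormval : ∀ n, (∫ t in Ioc (0:ℝ) 1, ‖F n t‖) = cc (3/4) n * z ^ n * J (n+1) := by
    intro n
    rw [← hval n]
    apply setIntegral_congr_fun measurableSet_Ioc
    intro t ht
    exact Real.norm_of_nonneg (hnonneg n t ht)
  have hbound : ∀ n, cc (3/4) n * z ^ n * J (n+1) ≤ 16/5 * z ^ n := by
    intro n
    have hP94 := P_pos (show (0:ℝ) < 9/4 by norm_num) n
    have hfac : ((n+1).factorial : ℝ) = ((n:ℝ)+1) * (n.factorial : ℝ) := by
      rw [Nat.factorial_succ]; push_cast; ring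
    have hfne : ((n.factorial : ℝ)) ≠ 0 := by positivity
    rw [J_closed n]
    have e1 : cc (3/4) n * z ^ n * (16/5 * ((n+1).factorial : ℝ) / P (9/4) n)
        = (16/5) * ((((n:ℝ)+1) * P (3/4) n) / P (9/4) n) * z ^ n := by
      unfold cc
      rw [hfac]
      field_simp
    rw [e1]
    have e2 : (((n:ℝ)+1) * P (3/4) n) / P (9/4) n ≤ 1 := (div_le_one hP94).mpr (P_ratio n)
    have e3 : (0:ℝ) ≤ (((n:ℝ)+1) * P (3/4) n) / P (9/4) n := by
      have := cc_nonneg (show (0:ℝ) < 3/4 by norm_num) n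
      have h34 := P_pos (show (0:ℝ) < 3/4 by norm_num) n
      positivity
    have e4 : (0:ℝ) ≤ z ^ n := by positivity
    nlinarith [e2, e3, e4]
  have hsummable : Summable (fun n => ∫ t in Ioc (0:ℝ) 1, ‖F n t‖) := by
    apply Summable.of_nonneg_of_le
      (fun n => integral_nonneg (fun t => norm_nonneg _))
      (fun n => by rw [hnormval n]; exact hbound n)
      ((summable_geometric_of_lt_one hz0.le hz1).mul_left (16/5))
  have hkey := MeasureTheory.integral_tsum_of_summable_integral_norm hInt hsummable
  have hptw : ∀ t ∈ Ioc (0:ℝ) 1, (∑' n, F n t)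
      = t ^ (-(3/4):ℝ) * (1 - t) * (1 - z * (1 - t)) ^ (-(3/4):ℝ) := by
    intro t ht
    have h2 : (0:ℝ) ≤ 1 - t := by linarith [ht.2]
    have hy : |z * (1 - t)| < 1 := by
      rw [abs_of_nonneg (mul_nonneg hz0.le h2)]
      nlinarith [ht.1, ht.2]
    have hb := hasSum_binomial (a := 3/4) (by norm_num) (by norm_num) hy
    have hb2 := hb.mul_left (t ^ (-(3/4):ℝ) * (1 - t))
    have hfe : (fun n : ℕ => t ^ (-(3/4):ℝ) * (1 - t) * (cc (3/4) n * (z * (1 - t)) ^ n))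
        = fun n => F n t := by
      funext n
      rw [hF]
      simp only [mul_pow]
      ring
    exact (hfe ▸ hb2).tsum_eq
  calc (∫ t in (0:ℝ)..1, t ^ (-(3/4):ℝ) * (1 - t) * (1 - z * (1 - t)) ^ (-(3/4):ℝ))
      = ∫ t in Ioc (0:ℝ) 1, t ^ (-(3/4):ℝ) * (1 - t) * (1 - z * (1 - t)) ^ (-(3/4):ℝ) :=
        intervalIntegral.integral_of_le zero_le_one
    _ = ∫ t in Ioc (0:ℝ) 1, ∑' n, F n t := by
        apply setIntegral_congr_fun measurableSet_Ioc
        intro t ht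
        exact (hptw t ht).symm
    _ = ∑' n, ∫ t in Ioc (0:ℝ) 1, F n t := hkey.symm
    _ = ∑' n, cc (3/4) n * z ^ n * J (n+1) := tsum_congr hval

lemma final_sum {z : ℝ} (hz0 : 0 < z) (hz1 : z < 1) :
    (∑' n : ℕ, cc (3/4) n * z ^ n * J (n + 1))
      = 16/5 * ∑' n : ℕ, ((ascPochhammer ℝ n).eval (3/4 : ℝ) * (ascPochhammer ℝ n).eval (2 : ℝ) /
          ((ascPochhammer ℝ n).eval (9/4 : ℝ) * (n.factorial : ℝ))) * z ^ n := by
  rw [← tsum_mul_left]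
  apply tsum_congr
  intro n
  rw [J_closed n]
  show cc (3/4) n * z ^ n * (16/5 * ((n+1).factorial : ℝ) / P (9/4) n)
      = 16/5 * (P (3/4) n * P 2 n / (P (9/4) n * (n.factorial : ℝ)) * z ^ n)
  rw [P_two]
  unfold cc
  have h94 := (P_pos (show (0:ℝ) < 9/4 by norm_num) n).ne'
  have hfne : ((n.factorial : ℝ)) ≠ 0 := by positivity
  field_simp


end Stmt14

open Stmt14

/-- For every χ ∈ (0,1),
∫_χ^1 (1−ζ) ζ^{−3/4} (ζ−χ)^{−3/4} dζ = (16/5)·(1−χ)^{5/4}·₂F₁(3/4, 2; 9/4; 1−χ). -/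
theorem stmt14 (χ : ℝ) (hχ : χ ∈ Set.Ioo (0 : ℝ) 1) :
    Aint χ = (16/5) * (1 - χ) ^ ((5/4 : ℝ)) * hyp2F1 (3/4) 2 (9/4) (1 - χ) := by
  obtain ⟨hχ0, hχ1⟩ := hχ
  set z : ℝ := 1 - χ with hzdef
  have hz0 : 0 < z := by rw [hzdef]; linarith
  have hz1 : z < 1 := by rw [hzdef]; linarith
  have h1 : (∫ u in (0:ℝ)..z,
      (1 - (u + χ)) * (u + χ) ^ (-(3/4) : ℝ) * (u + χ - χ) ^ (-(3/4) : ℝ)) = Aint χ := by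
    rw [intervalIntegral.integral_comp_add_right
      (fun ζ => (1 - ζ) * ζ ^ (-(3/4) : ℝ) * (ζ - χ) ^ (-(3/4) : ℝ)) χ]
    rw [zero_add, show z + χ = 1 by rw [hzdef]; ring]
    rfl
  have h2 : (∫ u in (0:ℝ)..z,
      (1 - (u + χ)) * (u + χ) ^ (-(3/4) : ℝ) * (u + χ - χ) ^ (-(3/4) : ℝ))
      = z * ∫ t in (0:ℝ)..1,
        (1 - (t * z + χ)) * (t * z + χ) ^ (-(3/4) : ℝ) * (t * z + χ - χ) ^ (-(3/4) : ℝ) := by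
    have h := intervalIntegral.smul_integral_comp_mul_right (a := (0:ℝ)) (b := (1:ℝ))
      (fun u => (1 - (u + χ)) * (u + χ) ^ (-(3/4) : ℝ) * (u + χ - χ) ^ (-(3/4) : ℝ)) z
    simp only [zero_mul, one_mul, smul_eq_mul] at h
    exact h.symm
  have h3 : (∫ t in (0:ℝ)..1,
        (1 - (t * z + χ)) * (t * z + χ) ^ (-(3/4) : ℝ) * (t * z + χ - χ) ^ (-(3/4) : ℝ))
      = (z * z ^ (-(3/4) : ℝ)) *
        ∫ t in (0:ℝ)..1, t ^ (-(3/4):ℝ) * (1 - t) * (1 - z * (1 - t)) ^ (-(3/4):ℝ) := by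
    rw [← intervalIntegral.integral_const_mul]
    apply intervalIntegral.integral_congr
    intro t ht
    rw [uIcc_of_le zero_le_one] at ht
    have e1 : 1 - (t * z + χ) = z * (1 - t) := by rw [hzdef]; ring
    have e2 : t * z + χ = 1 - z * (1 - t) := by rw [hzdef]; ring
    have e3 : t * z + χ - χ = t * z := by ring
    simp only []
    rw [e1, e3, e2]
    rw [Real.mul_rpow ht.1 hz0.le]
    ring
  have hpow : z * (z * z ^ (-(3/4) : ℝ)) = z ^ ((5/4) : ℝ) := by
    rw [show ((5/4):ℝ) = 1 + (1 + -(3/4)) by norm_num, Real.rpow_add hz0,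
      Real.rpow_add hz0, Real.rpow_one]
  rw [← h1, h2, h3, Kseries hz0 hz1, hyp2F1, final_sum hz0 hz1]
  set T := ∑' n : ℕ, ((ascPochhammer ℝ n).eval (3/4 : ℝ) * (ascPochhammer ℝ n).eval (2 : ℝ) /
      ((ascPochhammer ℝ n).eval (9/4 : ℝ) * (n.factorial : ℝ))) * z ^ n with hT
  linear_combination (16/5 * T) * hpow
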